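/- arXiv:2502.21270 — 2 statements merged into one kernel-verified Lean document; each statement's English description precedes it below -/
import Mathlib

section
/- Let k and i be positive integers with i < k, and let a_1, ..., a_i be integers with 2 ≤ a_j ≤ k for all j. Set m = min(k, (∑_j a_j) - (i-1)) and w_t = (t-1)(2k-t). Then (∑_{j=1}^i w_{a_j}) / w_m ≥ (2k-2)/(2k-1-i), i.e., (2k-1-i)·(∑_{j=1}^i w_{a_j}) ≥ (2k-2)·w_m. -/
lemma vir_aux (k : ℤ) (i : ℕ) (hi : 0 < i) (hik : (i : ℤ) < k) :
    ∀ n : ℕ, ∀ a : Fin i → ℤ, (∀ j, 2 ≤ a j ∧ a j ≤ k) →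
      (∑ j, a j) = 2 * (i : ℤ) + n →
      (2 * k - 2) *
          ((min k ((∑ j, a j) - ((i : ℤ) - 1)) - 1) *
            (2 * k - min k ((∑ j, a j) - ((i : ℤ) - 1)))) ≤
        (2 * k - 1 - (i : ℤ)) * ∑ j, (a j - 1) * (2 * k - a j) := by
  intro n
  induction n with
  | zero =>
    intro a ha hsum
    have h2 : ∀ j, a j = 2 := by
      have h0 : ∑ j, (a j - 2) = 0 := by
        rw [Finset.sum_sub_distrib, Finset.sum_const, Finset.card_univ,
          Fintype.card_fin, nsmul_eq_mul]
        push_cast at hsum ⊢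
        linarith
      intro j
      have := (Finset.sum_eq_zero_iff_of_nonneg
        (fun j _ => by linarith [(ha j).1])).mp h0 j (Finset.mem_univ j)
      linarith
    have hsum2 : (∑ j, a j) = 2 * (i : ℤ) := by
      simpa using hsum
    rw [hsum2]
    have hmin : min k (2 * (i : ℤ) - ((i : ℤ) - 1)) = (i : ℤ) + 1 := by
      rw [min_eq_right] <;> [skip; omega]
      ring_nf
    rw [hmin]
    have hw : ∑ j, (a j - 1) * (2 * k - a j) = (i : ℤ) * (2 * k - 2) := by
      rw [Finset.sum_congr rfl (fun j _ => by rw [h2 j])]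
      rw [Finset.sum_const, Finset.card_univ, Fintype.card_fin, nsmul_eq_mul]
      ring
    rw [hw]
    exact le_of_eq (by ring)
  | succ n ih =>
    intro a ha hsum
    obtain ⟨j0, hj0⟩ : ∃ j, 2 < a j := by
      by_contra h
      push_neg at h
      have hle : (∑ j, a j) ≤ ∑ _j : Fin i, (2 : ℤ) :=
        Finset.sum_le_sum fun j _ => h j
      rw [Finset.sum_const, Finset.card_univ, Fintype.card_fin, nsmul_eq_mul,
        hsum] at hle
      push_cast at hle
      linarith
    set a' : Fin i → ℤ := Function.update a j0 (a j0 - 1) with ha'def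
    have ha' : ∀ j, 2 ≤ a' j ∧ a' j ≤ k := by
      intro j
      rcases eq_or_ne j j0 with rfl | hne
      · simp only [ha'def, Function.update_self]
        exact ⟨by omega, by linarith [(ha j).2]⟩
      · simp only [ha'def, Function.update_of_ne hne]
        exact ha j
    have hsum' : ∑ j, a' j = (∑ j, a j) - 1 := by
      rw [ha'def, Finset.sum_update_of_mem (Finset.mem_univ j0),
        Finset.sdiff_singleton_eq_erase,
        Finset.sum_erase_eq_sub (Finset.mem_univ j0)]
      ring
    have hw' : ∑ j, (a' j - 1) * (2 * k - a' j)
        = (∑ j, (a j - 1) * (2 * k - a j)) - 2 * (k - a j0 + 1) := by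
      have hcomp : (fun j => (a' j - 1) * (2 * k - a' j))
          = Function.update (fun j => (a j - 1) * (2 * k - a j)) j0
              ((a j0 - 1 - 1) * (2 * k - (a j0 - 1))) := by
        funext j
        rcases eq_or_ne j j0 with rfl | hne
        · simp [ha'def]
        · simp [ha'def, Function.update_of_ne hne]
      calc ∑ j, (a' j - 1) * (2 * k - a' j)
          = ∑ j, Function.update (fun j => (a j - 1) * (2 * k - a j)) j0
              ((a j0 - 1 - 1) * (2 * k - (a j0 - 1))) j := by rw [hcomp]
        _ = _ := by
            rw [Finset.sum_update_of_mem (Finset.mem_univ j0),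
              Finset.sdiff_singleton_eq_erase,
              Finset.sum_erase_eq_sub (Finset.mem_univ j0)]
            ring
    have H := ih a' ha' (by rw [hsum', hsum]; push_cast; ring)
    rw [hsum', hw'] at H
    have hkey : a j0 - 2 ≤ (∑ j, a j) - 2 * (i : ℤ) := by
      have h1 : a j0 - 2 ≤ ∑ j, (a j - 2) :=
        Finset.single_le_sum (f := fun j => a j - 2) (fun j _ => by linarith [(ha j).1])
          (Finset.mem_univ j0)
      have h2 : ∑ j, (a j - 2) = (∑ j, a j) - 2 * (i : ℤ) := by
        rw [Finset.sum_sub_distrib, Finset.sum_const, Finset.card_univ,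
          Fintype.card_fin, nsmul_eq_mul]
        ring
      linarith
    have hi1 : (1 : ℤ) ≤ (i : ℤ) := by exact_mod_cast hi
    have haj0k : a j0 ≤ k := (ha j0).2
    by_cases hm : (∑ j, a j) - ((i : ℤ) - 1) ≤ k
    · rw [min_eq_right hm]
      rw [min_eq_right (by linarith)] at H
      nlinarith [H, mul_nonneg (by linarith : (0:ℤ) ≤ (i : ℤ) - 1)
          (by linarith : (0:ℤ) ≤ 2 * k - 2 - (k - a j0 + 1)),
        mul_nonneg (by linarith : (0:ℤ) ≤ 2 * k - 2)
          (by linarith : (0:ℤ) ≤ (∑ j, a j) - a j0 - 2 * (i : ℤ) + 2)]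
    · push_neg at hm
      rw [min_eq_left (by linarith)]
      rw [min_eq_left (by linarith)] at H
      nlinarith [H, mul_nonneg (by linarith : (0:ℤ) ≤ 2 * k - 1 - (i : ℤ))
          (by linarith : (0:ℤ) ≤ 2 * (k - a j0 + 1))]


/-- Conformal weight lemma for `Vir_{2,2k+1}`: for integers `2 ≤ a_j ≤ k`
(`j = 1, …, i`) with `i < k`, setting `m = min(k, ∑ a_j - (i-1))` and
`w t = (t-1)(2k-t)`, we have `(∑ w (a j)) / w m ≥ (2k-2)/(2k-1-i)`, i.e.
`(2k-1-i) · ∑ w (a j) ≥ (2k-2) · w m`. -/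
theorem vir_weight_ratio (k : ℤ) (i : ℕ) (hi : 0 < i) (hik : (i : ℤ) < k)
    (a : Fin i → ℤ) (ha : ∀ j, 2 ≤ a j ∧ a j ≤ k) :
    (2 * k - 2) *
        ((min k ((∑ j, a j) - ((i : ℤ) - 1)) - 1) *
          (2 * k - min k ((∑ j, a j) - ((i : ℤ) - 1)))) ≤
      (2 * k - 1 - (i : ℤ)) * ∑ j, (a j - 1) * (2 * k - a j) := by
  have h2i : 2 * (i : ℤ) ≤ ∑ j, a j := by
    calc (2 : ℤ) * i = ∑ _j : Fin i, (2 : ℤ) := by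
          rw [Finset.sum_const, Finset.card_univ, Fintype.card_fin,
            nsmul_eq_mul]; ring
      _ ≤ ∑ j, a j := Finset.sum_le_sum fun j _ => (ha j).1
  exact vir_aux k i hi hik ((∑ j, a j) - 2 * i).toNat a ha
    (by rw [Int.toNat_of_nonneg (by linarith)]; ring)
end

section
/- Let n, k be integers with n ≥ 4 and k ≥ 3, and let I be a subset of {1,...,n} with |I| ≥ k and 2|I| ≤ n. Suppose each w_{a_p} ≥ 2(k-1) for p ∈ I ∪ I^c (where a_p ≥ 2 and w_t = (t-1)(2k-t)), and w_m ≤ k(k-1). Then ∑_{p∈I} w_{a_p}·(n-|I|)(n-|I|-1)/((n-1)(n-2)) + ∑_{p∉I} w_{a_p}·|I|(|I|-1)/((n-1)(n-2)) > w_m. In particular, it suffices to show 2(k-1)·|I|·(n-|I|)/(n-1) > k(k-1), which follows from (n-|I|)/(n-1) > 1/2. -/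
open Finset

/-- Case 1 (`|I| ≥ k`) of the proof that the standard form of the conformal
block divisor of `Vir_{2,2k+1}` has negative coefficients. -/
theorem vir_standard_form_case1 (n k : ℕ) (hn : 4 ≤ n) (hk : 3 ≤ k)
    (I : Finset (Fin n)) (hIk : k ≤ I.card) (hI2 : 2 * I.card ≤ n)
    (a : Fin n → ℤ) (ha : ∀ p, 2 ≤ a p)
    (hw : ∀ p, 2 * ((k : ℤ) - 1) ≤ (a p - 1) * (2 * (k : ℤ) - a p))
    (wm : ℚ) (hwm : wm ≤ (k : ℚ) * ((k : ℚ) - 1)) :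
    wm <
      (∑ p ∈ I, ((a p : ℚ) - 1) * (2 * (k : ℚ) - (a p : ℚ))) *
          (((n : ℚ) - I.card) * ((n : ℚ) - I.card - 1) /
            (((n : ℚ) - 1) * ((n : ℚ) - 2))) +
        (∑ p ∈ Iᶜ, ((a p : ℚ) - 1) * (2 * (k : ℚ) - (a p : ℚ))) *
          (((I.card : ℚ)) * ((I.card : ℚ) - 1) /
            (((n : ℚ) - 1) * ((n : ℚ) - 2))) := by
  have hwq : ∀ p : Fin n, 2 * ((k : ℚ) - 1) ≤ ((a p : ℚ) - 1) * (2 * (k : ℚ) - (a p : ℚ)) := by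
    intro p
    have := hw p
    push_cast
    exact_mod_cast this
  have hIn : I.card ≤ n := by
    have := I.card_le_univ
    simpa using this
  have hcc : (Iᶜ.card : ℚ) = (n : ℚ) - I.card := by
    rw [Finset.card_compl, Fintype.card_fin, Nat.cast_sub hIn]
  set c : ℚ := (I.card : ℚ) with hc
  have hck : (k : ℚ) ≤ c := by rw [hc]; exact_mod_cast hIk
  have h2c : 2 * c ≤ (n : ℚ) := by rw [hc]; exact_mod_cast hI2
  have hk3 : (3 : ℚ) ≤ (k : ℚ) := by exact_mod_cast hk
  have hn4 : (4 : ℚ) ≤ (n : ℚ) := by exact_mod_cast hn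
  -- lower bounds on the sums
  have h1 : c * (2 * ((k : ℚ) - 1)) ≤ ∑ p ∈ I, ((a p : ℚ) - 1) * (2 * (k : ℚ) - (a p : ℚ)) := by
    calc c * (2 * ((k : ℚ) - 1)) = ∑ _p ∈ I, 2 * ((k : ℚ) - 1) := by
          rw [Finset.sum_const, nsmul_eq_mul]
      _ ≤ _ := Finset.sum_le_sum (fun p _ => hwq p)
  have h2 : ((n : ℚ) - c) * (2 * ((k : ℚ) - 1)) ≤
      ∑ p ∈ Iᶜ, ((a p : ℚ) - 1) * (2 * (k : ℚ) - (a p : ℚ)) := by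
    calc ((n : ℚ) - c) * (2 * ((k : ℚ) - 1)) = ∑ _p ∈ Iᶜ, 2 * ((k : ℚ) - 1) := by
          rw [Finset.sum_const, nsmul_eq_mul, hcc]
      _ ≤ _ := Finset.sum_le_sum (fun p _ => hwq p)
  have hD : (0 : ℚ) < ((n : ℚ) - 1) * ((n : ℚ) - 2) := by nlinarith
  have hA : (0 : ℚ) ≤ ((n : ℚ) - c) * ((n : ℚ) - c - 1) := by nlinarith
  have hB : (0 : ℚ) ≤ c * (c - 1) := by nlinarith
  set S1 := ∑ p ∈ I, ((a p : ℚ) - 1) * (2 * (k : ℚ) - (a p : ℚ)) with hS1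
  set S2 := ∑ p ∈ Iᶜ, ((a p : ℚ) - 1) * (2 * (k : ℚ) - (a p : ℚ)) with hS2
  have key : (k : ℚ) * ((k : ℚ) - 1) * (((n : ℚ) - 1) * ((n : ℚ) - 2)) <
      2 * ((k : ℚ) - 1) * c * ((n : ℚ) - c) * ((n : ℚ) - 2) := by
    have key2 : (k : ℚ) * ((n : ℚ) - 1) < 2 * c * ((n : ℚ) - c) := by
      nlinarith [mul_nonneg (show (0:ℚ) ≤ c - (k:ℚ) by linarith) (show (0:ℚ) ≤ (n:ℚ) by positivity),
        mul_nonneg (show (0:ℚ) ≤ c by linarith) (show (0:ℚ) ≤ (n:ℚ) - 2*c by linarith)]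
    nlinarith [mul_lt_mul_of_pos_right key2
      (show (0:ℚ) < ((k:ℚ)-1)*((n:ℚ)-2) by nlinarith)]
  have hmul1 : c * (2 * ((k : ℚ) - 1)) * (((n : ℚ) - c) * ((n : ℚ) - c - 1)) ≤
      S1 * (((n : ℚ) - c) * ((n : ℚ) - c - 1)) := mul_le_mul_of_nonneg_right h1 hA
  have hmul2 : ((n : ℚ) - c) * (2 * ((k : ℚ) - 1)) * (c * (c - 1)) ≤
      S2 * (c * (c - 1)) := mul_le_mul_of_nonneg_right h2 hB
  rw [← mul_div_assoc, ← mul_div_assoc, ← add_div, lt_div_iff₀ hD]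
  linarith [hmul1, hmul2, key, mul_le_mul_of_nonneg_right hwm (le_of_lt hD)]
end
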